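/- arXiv:1502.03484 — 3 statements merged into one kernel-verified Lean document; each statement's English description precedes it below -/
import Mathlib

section
/- For polynomials f, g over a commutative ring R with f of degree at most n-1 (i.e., f has n coefficients), the content ideals satisfy c(fg)·c(g)^{n-1} = c(f)·c(g)^n, where c(h) denotes the ideal of R generated by the coefficients of h. -/
/-- The content ideal of a polynomial: the ideal of `R` generated by its coefficients. -/
def contentIdeal {R : Type*} [CommRing R] (f : Polynomial R) : Ideal R :=
  Ideal.span (Set.range f.coeff)

namespace DedekindMertensAux

open Polynomial Matrix Finset

variable {R : Type*} [CommRing R]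

/-- `ℤ`-indexed coefficients of a polynomial. -/
noncomputable def zc (g : Polynomial R) (z : ℤ) : R :=
  if 0 ≤ z then g.coeff z.toNat else 0

lemma zc_mem (g : Polynomial R) (z : ℤ) : zc g z ∈ _root_.contentIdeal g := by
  unfold zc; split
  · exact Ideal.subset_span ⟨z.toNat, rfl⟩
  · exact (_root_.contentIdeal g).zero_mem

lemma zc_ofNat (g : Polynomial R) (k : ℕ) : zc g (k : ℤ) = g.coeff k := by
  simp [zc]

lemma zc_neg (g : Polynomial R) {z : ℤ} (h : z < 0) : zc g z = 0 := if_neg (by omega)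

lemma zc_big (g : Polynomial R) {z : ℤ} (h : (g.natDegree : ℤ) < z) : zc g z = 0 := by
  unfold zc; split
  · exact g.coeff_eq_zero_of_natDegree_lt (by omega)
  · rfl

lemma units_smul_mem (I : Ideal R) (u : ℤˣ) {x : R} (hx : x ∈ I) : u • x ∈ I := by
  rcases Int.units_eq_one_or u with rfl | rfl
  · simpa [Units.smul_def] using hx
  · simpa [Units.smul_def] using I.neg_mem hx

lemma prod_mem_pow {ι : Type*} [DecidableEq ι] (I : Ideal R) (v : ι → R) :
    ∀ S : Finset ι, (∀ i ∈ S, v i ∈ I) → (∏ i ∈ S, v i) ∈ I ^ S.card := by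
  intro S
  induction S using Finset.induction_on with
  | empty => intro _; simp [Ideal.one_eq_top]
  | @insert a S ha ih =>
    intro h
    rw [Finset.prod_insert ha, Finset.card_insert_of_notMem ha, pow_succ,
      mul_comm (I ^ S.card) I]
    exact Ideal.mul_mem_mul (h a (Finset.mem_insert_self a S))
      (ih fun i hi => h i (Finset.mem_insert_of_mem hi))

lemma adjugate_mem (I : Ideal R) {m : ℕ} (A : Matrix (Fin (m + 1)) (Fin (m + 1)) R)
    (h : ∀ t s, A t s ∈ I) (i j : Fin (m + 1)) : A.adjugate i j ∈ I ^ m := by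
  rw [Matrix.adjugate_apply, Matrix.det_apply]
  refine Submodule.sum_mem _ fun σ _ => units_smul_mem _ _ ?_
  set B := A.updateRow j (Pi.single i 1) with hB
  rw [← Finset.mul_prod_erase Finset.univ _ (Finset.mem_univ (σ⁻¹ j))]
  have hprod : (∏ x ∈ Finset.univ.erase (σ⁻¹ j), B (σ x) x) ∈
      I ^ (Finset.univ.erase (σ⁻¹ j)).card := by
    refine prod_mem_pow I _ _ fun x hx => ?_
    have hxne : σ x ≠ j := by
      intro hc
      exact (Finset.mem_erase.mp hx).1 (by rw [← hc]; simp)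
    rw [hB, Matrix.updateRow_ne hxne]
    exact h _ _
  have hcard : (Finset.univ.erase (σ⁻¹ j)).card = m := by
    rw [Finset.card_erase_of_mem (Finset.mem_univ _)]
    simp
  rw [hcard] at hprod
  exact Ideal.mul_mem_left _ _ hprod

lemma conv (f g : Polynomial R) {m : ℕ} (hf : f.natDegree < m + 1) (z : ℤ) :
    ∑ s : Fin (m + 1), f.coeff s * zc g (z - s) = zc (f * g) z := by
  rcases lt_or_ge z 0 with hz | hz
  · rw [zc_neg _ hz]
    refine Finset.sum_eq_zero fun s _ => ?_
    rw [zc_neg _ (by have : (0:ℤ) ≤ ((s : ℕ) : ℤ) := Int.natCast_nonneg _; omega), mul_zero]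
  · obtain ⟨K, rfl⟩ : ∃ K : ℕ, z = (K : ℤ) := ⟨z.toNat, (Int.toNat_of_nonneg hz).symm⟩
    rw [zc_ofNat, Polynomial.coeff_mul, Finset.Nat.sum_antidiagonal_eq_sum_range_succ_mk]
    rw [Fin.sum_univ_eq_sum_range (fun s => f.coeff s * zc g ((K : ℤ) - s))]
    have hterm : ∀ i ∈ Finset.range (K + 1),
        f.coeff i * g.coeff (K - i) = f.coeff i * zc g ((K : ℤ) - i) := by
      intro i hi
      have hiK : i ≤ K := by have := Finset.mem_range.mp hi; omega
      congr 1
      unfold zc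
      rw [if_pos (by omega)]
      congr 1
      omega
    have h1 : ∑ i ∈ Finset.range (m + 1), f.coeff i * zc g ((K : ℤ) - i)
        = ∑ i ∈ Finset.range (m + 1 + (K + 1)), f.coeff i * zc g ((K : ℤ) - i) := by
      refine Finset.sum_subset (Finset.range_subset_range.mpr (by omega)) fun i _ hni => ?_
      have hi' : m + 1 ≤ i := by simpa using hni
      rw [f.coeff_eq_zero_of_natDegree_lt (by omega), zero_mul]
    have h2 : ∑ i ∈ Finset.range (K + 1), f.coeff i * zc g ((K : ℤ) - i)
        = ∑ i ∈ Finset.range (m + 1 + (K + 1)), f.coeff i * zc g ((K : ℤ) - i) := by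
      refine Finset.sum_subset (Finset.range_subset_range.mpr (by omega)) fun i _ hni => ?_
      have hi' : K + 1 ≤ i := by simpa using hni
      rw [zc_neg _ (by omega), mul_zero]
    calc ∑ i ∈ Finset.range (m + 1), f.coeff i * zc g ((K : ℤ) - i)
        = ∑ i ∈ Finset.range (m + 1 + (K + 1)), f.coeff i * zc g ((K : ℤ) - i) := h1
      _ = ∑ i ∈ Finset.range (K + 1), f.coeff i * zc g ((K : ℤ) - i) := h2.symm
      _ = ∑ k ∈ Finset.range (K + 1), f.coeff (k, K - k).1 * g.coeff (k, K - k).2 :=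
          Finset.sum_congr rfl fun i hi => (hterm i hi).symm

/-- The Toeplitz-type matrix of coefficients of `g`. -/
noncomputable def dmat (g : Polynomial R) (m : ℕ) (k : Fin (m + 1) → ℤ) :
    Matrix (Fin (m + 1)) (Fin (m + 1)) R :=
  Matrix.of fun t s => zc g (k t - (s : ℕ))

/-- The ideal generated by all `dmat` determinants. -/
noncomputable def spanD (g : Polynomial R) (m : ℕ) : Ideal R :=
  Ideal.span {d : R | ∃ k : Fin (m + 1) → ℤ, d = (dmat g m k).det}

lemma det_mul_coeff (f g : Polynomial R) {m : ℕ} (hf : f.natDegree < m + 1)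
    (k : Fin (m + 1) → ℤ) (s : Fin (m + 1)) :
    (dmat g m k).det * f.coeff s ∈ _root_.contentIdeal (f * g) * _root_.contentIdeal g ^ m := by
  set A := dmat g m k with hA
  have hMa : A *ᵥ (fun s : Fin (m + 1) => f.coeff s) = fun t => zc (f * g) (k t) := by
    funext t
    show ∑ u, A t u * f.coeff u = _
    rw [← conv f g hf (k t)]
    exact Finset.sum_congr rfl fun u _ => mul_comm _ _
  have h2 : A.det • (fun s : Fin (m + 1) => f.coeff s)
      = A.adjugate *ᵥ (fun t => zc (f * g) (k t)) := by
    rw [← hMa, Matrix.mulVec_mulVec, Matrix.adjugate_mul, Matrix.smul_mulVec,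
      Matrix.one_mulVec]
  have h3 := congrFun h2 s
  simp only [Pi.smul_apply, smul_eq_mul] at h3
  rw [h3]
  show ∑ t, A.adjugate s t * zc (f * g) (k t) ∈ _
  refine Submodule.sum_mem _ fun t _ => ?_
  rw [mul_comm (A.adjugate s t)]
  exact Ideal.mul_mem_mul (zc_mem _ _)
    (adjugate_mem _ A (fun t u => zc_mem g _) s t)

/-- Measure for the straightening induction: sum of squares of the exponents. -/
noncomputable def μ {m : ℕ} (α : Fin (m + 1) → ℤ) : ℤ := ∑ t, (α t) ^ 2

lemma straighten (g : Polynomial R) (m : ℕ) :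
    ∀ (N : ℕ) (α : Fin (m + 1) → ℤ),
      (m + 1 : ℤ) * (g.natDegree : ℤ) ^ 2 + 1 - μ α ≤ (N : ℤ) →
      (∏ t, zc g (α t)) ∈ spanD g m := by
  have hbadcase : ∀ (α : Fin (m + 1) → ℤ) (t : Fin (m + 1)),
      (α t < 0 ∨ (g.natDegree : ℤ) < α t) → (∏ t, zc g (α t)) ∈ spanD g m := by
    intro α t ht
    have : zc g (α t) = 0 := by
      rcases ht with ht | ht
      · exact zc_neg _ ht
      · exact zc_big _ ht
    rw [Finset.prod_eq_zero (Finset.mem_univ t) this]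
    exact (spanD g m).zero_mem
  have hboundμ : ∀ (α : Fin (m + 1) → ℤ), (∀ t, 0 ≤ α t ∧ α t ≤ (g.natDegree : ℤ)) →
      μ α ≤ (m + 1 : ℤ) * (g.natDegree : ℤ) ^ 2 := by
    intro α hα
    calc μ α ≤ ∑ _t : Fin (m + 1), (g.natDegree : ℤ) ^ 2 :=
          Finset.sum_le_sum fun t _ => pow_le_pow_left₀ (hα t).1 (hα t).2 2
      _ = (m + 1 : ℤ) * (g.natDegree : ℤ) ^ 2 := by
          rw [Finset.sum_const, Finset.card_univ, Fintype.card_fin]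
          ring
  intro N
  induction N with
  | zero =>
    intro α hα
    by_cases hbad : ∃ t, α t < 0 ∨ (g.natDegree : ℤ) < α t
    · obtain ⟨t, ht⟩ := hbad
      exact hbadcase α t ht
    · push_neg at hbad
      have := hboundμ α fun t => ⟨(hbad t).1, (hbad t).2⟩
      exfalso
      simp only [Nat.cast_zero] at hα
      linarith
  | succ N ih =>
    intro α hα
    by_cases hbad : ∃ t, α t < 0 ∨ (g.natDegree : ℤ) < α t
    · obtain ⟨t, ht⟩ := hbad
      exact hbadcase α t ht
    push_neg at hbad
    have hμle : μ α ≤ (m + 1 : ℤ) * (g.natDegree : ℤ) ^ 2 :=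
      hboundμ α fun t => ⟨(hbad t).1, (hbad t).2⟩
    -- sort α
    set ρ := Tuple.sort α with hρ
    have hβ : Monotone (α ∘ ρ) := Tuple.monotone_sort α
    set β : Fin (m + 1) → ℤ := α ∘ ρ with hβdef
    have hprodβ : (∏ t, zc g (β t)) = ∏ t, zc g (α t) :=
      Equiv.prod_comp ρ (fun u => zc g (α u))
    have hμβ : (∑ t, (β t) ^ 2) = μ α := Equiv.sum_comp ρ (fun u => (α u) ^ 2)
    -- the determinant expansion
    set k : Fin (m + 1) → ℤ := fun t => β t + (t : ℕ) with hk
    have hdet : (dmat g m k).det = ∑ σ : Equiv.Perm (Fin (m + 1)),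
        Equiv.Perm.sign σ • ∏ t, zc g (β (σ t) + ((σ t : ℕ) : ℤ) - ((t : ℕ) : ℤ)) :=
      Matrix.det_apply _
    have hsplit := Finset.add_sum_erase Finset.univ
      (fun σ : Equiv.Perm (Fin (m + 1)) =>
        Equiv.Perm.sign σ • ∏ t, zc g (β (σ t) + ((σ t : ℕ) : ℤ) - ((t : ℕ) : ℤ)))
      (Finset.mem_univ 1)
    beta_reduce at hsplit
    have hid : (Equiv.Perm.sign (1 : Equiv.Perm (Fin (m + 1)))) •
        (∏ t, zc g (β ((1 : Equiv.Perm (Fin (m + 1))) t) +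
          (((1 : Equiv.Perm (Fin (m + 1))) t : ℕ) : ℤ) - ((t : ℕ) : ℤ)))
        = ∏ t, zc g (α t) := by
      rw [← hprodβ]
      simp only [Equiv.Perm.sign_one, one_smul, Equiv.Perm.one_apply]
      exact Finset.prod_congr rfl fun t _ => by rw [add_sub_cancel_right]
    have hkey : (∏ t, zc g (α t)) = (dmat g m k).det -
        ∑ σ ∈ Finset.univ.erase (1 : Equiv.Perm (Fin (m + 1))),
          Equiv.Perm.sign σ • ∏ t, zc g (β (σ t) + ((σ t : ℕ) : ℤ) - ((t : ℕ) : ℤ)) := by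
      rw [hdet, ← hsplit, hid]; ring
    rw [hkey]
    refine Submodule.sub_mem _ (Ideal.subset_span ⟨k, ?_⟩) (Submodule.sum_mem _ fun σ hσ => ?_)
    · rfl
    · -- σ ≠ 1 term
      have hσ1 : σ ≠ 1 := (Finset.mem_erase.mp hσ).1
      set α' : Fin (m + 1) → ℤ :=
        fun t => β (σ t) + ((σ t : ℕ) : ℤ) - ((t : ℕ) : ℤ) with hα'
      refine units_smul_mem _ _ (ih α' ?_)
      -- measure estimate
      have hexp : μ α' = (∑ t, (β (σ t)) ^ 2)
          + 2 * (∑ t, β (σ t) * (((σ t : ℕ) : ℤ) - ((t : ℕ) : ℤ)))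
          + ∑ t, (((σ t : ℕ) : ℤ) - ((t : ℕ) : ℤ)) ^ 2 := by
        unfold μ
        rw [Finset.mul_sum, ← Finset.sum_add_distrib, ← Finset.sum_add_distrib]
        exact Finset.sum_congr rfl fun t _ => by simp only [hα']; ring
      have hsq : (∑ t, (β (σ t)) ^ 2) = μ α := by
        rw [Equiv.sum_comp σ (fun u => (β u) ^ 2)]; exact hμβ
      have hrearr : 0 ≤ ∑ t, β (σ t) * (((σ t : ℕ) : ℤ) - ((t : ℕ) : ℤ)) := by
        have hmono : Monovary β (fun u : Fin (m + 1) => ((u : ℕ) : ℤ)) := by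
          intro i j hij
          refine hβ (le_of_lt ?_)
          beta_reduce at hij
          have h' : (i : ℕ) < (j : ℕ) := by exact_mod_cast hij
          exact h'
        have hle := hmono.sum_smul_comp_perm_le_sum_smul (σ := σ⁻¹)
        simp only [smul_eq_mul] at hle
        have hL : (∑ t, β (σ t) * ((t : ℕ) : ℤ))
            = ∑ u, β u * (((σ⁻¹ u : ℕ) : ℤ)) := by
          rw [← Equiv.sum_comp σ (fun u => β u * (((σ⁻¹ u : ℕ) : ℤ)))]
          exact Finset.sum_congr rfl fun t _ => by rw [← Equiv.Perm.mul_apply, inv_mul_cancel, Equiv.Perm.one_apply]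
        have hR : (∑ t, β (σ t) * ((σ t : ℕ) : ℤ)) = ∑ u, β u * ((u : ℕ) : ℤ) :=
          Equiv.sum_comp σ (fun u => β u * ((u : ℕ) : ℤ))
        have : ∑ t, β (σ t) * ((t : ℕ) : ℤ) ≤ ∑ t, β (σ t) * ((σ t : ℕ) : ℤ) := by
          rw [hL, hR]; exact hle
        have hdistrib : ∑ t, β (σ t) * (((σ t : ℕ) : ℤ) - ((t : ℕ) : ℤ))
            = (∑ t, β (σ t) * ((σ t : ℕ) : ℤ)) - ∑ t, β (σ t) * ((t : ℕ) : ℤ) := by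
          rw [← Finset.sum_sub_distrib]
          exact Finset.sum_congr rfl fun t _ => by ring
        rw [hdistrib]
        linarith
      have hT : 1 ≤ ∑ t, (((σ t : ℕ) : ℤ) - ((t : ℕ) : ℤ)) ^ 2 := by
        obtain ⟨t₀, ht₀⟩ : ∃ t₀, σ t₀ ≠ t₀ := by
          by_contra h
          push_neg at h
          exact hσ1 (Equiv.ext h)
        have hne : (((σ t₀ : ℕ) : ℤ) - ((t₀ : ℕ) : ℤ)) ≠ 0 := by
          have : (σ t₀ : ℕ) ≠ (t₀ : ℕ) := fun hc => ht₀ (Fin.val_injective hc)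
          omega
        have h1 : 1 ≤ (((σ t₀ : ℕ) : ℤ) - ((t₀ : ℕ) : ℤ)) ^ 2 := by
          have := sq_pos_of_ne_zero hne
          linarith
        calc (1 : ℤ) ≤ (((σ t₀ : ℕ) : ℤ) - ((t₀ : ℕ) : ℤ)) ^ 2 := h1
          _ ≤ ∑ t, (((σ t : ℕ) : ℤ) - ((t : ℕ) : ℤ)) ^ 2 :=
            Finset.single_le_sum
              (f := fun t : Fin (m + 1) => (((σ t : ℕ) : ℤ) - ((t : ℕ) : ℤ)) ^ 2)
              (fun t _ => sq_nonneg _) (Finset.mem_univ t₀)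
      have hμ' : μ α + 1 ≤ μ α' := by
        rw [hexp, hsq]
        linarith
      have hcast : ((N + 1 : ℕ) : ℤ) = (N : ℤ) + 1 := by push_cast; ring
      rw [hcast] at hα
      linarith

lemma pow_le_spanD (g : Polynomial R) (m : ℕ) :
    _root_.contentIdeal g ^ (m + 1) ≤ spanD g m := by
  have mon : ∀ mm : ℕ, _root_.contentIdeal g ^ (mm + 1) ≤
      Ideal.span {x : R | ∃ α : Fin (mm + 1) → ℤ, x = ∏ t, zc g (α t)} := by
    intro mm
    induction mm with
    | zero =>
      rw [pow_one]
      refine Ideal.span_le.mpr ?_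
      rintro x ⟨j, rfl⟩
      exact Ideal.subset_span ⟨fun _ => (j : ℤ), by simp [zc_ofNat]⟩
    | succ mm ih =>
      rw [pow_succ]
      refine Ideal.mul_le.mpr fun a ha b hb => ?_
      have ha' := ih ha
      refine Submodule.span_induction (p := fun a _ => a * b ∈
          Ideal.span {x : R | ∃ α : Fin (mm + 1 + 1) → ℤ, x = ∏ t, zc g (α t)})
        ?_ ?_ ?_ ?_ ha'
      · rintro x ⟨α, rfl⟩
        refine Submodule.span_induction (p := fun b _ => (∏ t, zc g (α t)) * b ∈
            Ideal.span {x : R | ∃ α : Fin (mm + 1 + 1) → ℤ, x = ∏ t, zc g (α t)})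
          ?_ ?_ ?_ ?_ hb
        · rintro y ⟨j, rfl⟩
          refine Ideal.subset_span ⟨Fin.snoc α (j : ℤ), ?_⟩
          conv_rhs => rw [Fin.prod_univ_castSucc]
          congr 1
          · exact Finset.prod_congr rfl fun t _ => by rw [Fin.snoc_castSucc]
          · rw [Fin.snoc_last, zc_ofNat]
        · simp
        · intro y z _ _ hy hz
          rw [mul_add]; exact Submodule.add_mem _ hy hz
        · intro c y _ hy
          rw [smul_eq_mul, mul_left_comm]
          exact Ideal.mul_mem_left _ _ hy
      · show (0 : R) * b ∈ _
        rw [zero_mul]; exact Submodule.zero_mem _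
      · intro y z _ _ hy hz
        rw [add_mul]; exact Submodule.add_mem _ hy hz
      · intro c y _ hy
        rw [smul_eq_mul, mul_assoc]
        exact Ideal.mul_mem_left _ _ hy
  refine le_trans (mon m) (Ideal.span_le.mpr ?_)
  rintro x ⟨α, rfl⟩
  exact straighten g m ((m + 1 : ℤ) * (g.natDegree : ℤ) ^ 2 + 1 - μ α).toNat α
    (Int.self_le_toNat _)

end DedekindMertensAux

/-- **Dedekind–Mertens formula**: for polynomials `f, g` over a commutative ring `R`,
with `f` having `n` coefficients (i.e. `natDegree f < n`),
`c(fg) · c(g)^(n-1) = c(f) · c(g)^n`. -/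
theorem dedekind_mertens {R : Type*} [CommRing R] (f g : Polynomial R) (n : ℕ)
    (hn : f.natDegree < n) :
    contentIdeal (f * g) * contentIdeal g ^ (n - 1) =
      contentIdeal f * contentIdeal g ^ n := by
  open DedekindMertensAux in
  obtain ⟨m, rfl⟩ : ∃ m, n = m + 1 := ⟨n - 1, by omega⟩
  have hred : m + 1 - 1 = m := rfl
  rw [hred]
  apply le_antisymm
  · -- easy direction
    have h1 : contentIdeal (f * g) ≤ contentIdeal f * contentIdeal g := by
      refine Ideal.span_le.mpr ?_
      rintro x ⟨kk, rfl⟩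
      rw [Polynomial.coeff_mul]
      exact Ideal.sum_mem _ fun ij _ =>
        Ideal.mul_mem_mul (Ideal.subset_span ⟨ij.1, rfl⟩) (Ideal.subset_span ⟨ij.2, rfl⟩)
    calc contentIdeal (f * g) * contentIdeal g ^ m
        ≤ contentIdeal f * contentIdeal g * contentIdeal g ^ m := Ideal.mul_mono_left h1
      _ = contentIdeal f * contentIdeal g ^ (m + 1) := by
          rw [mul_assoc, ← pow_succ']
  · -- hard direction
    refine Ideal.mul_le.mpr fun r hr s hs => ?_
    have hs' : s ∈ spanD g m := pow_le_spanD g m hs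
    refine Submodule.span_induction
      (p := fun x _ => x * s ∈ contentIdeal (f * g) * contentIdeal g ^ m)
      ?_ ?_ ?_ ?_ hr
    · rintro x ⟨i, rfl⟩
      refine Submodule.span_induction
        (p := fun y _ => f.coeff i * y ∈ contentIdeal (f * g) * contentIdeal g ^ m)
        ?_ ?_ ?_ ?_ hs'
      · rintro y ⟨k, rfl⟩
        by_cases him : i < m + 1
        · rw [mul_comm (f.coeff i)]
          exact det_mul_coeff f g hn k ⟨i, him⟩
        · rw [f.coeff_eq_zero_of_natDegree_lt (by omega), zero_mul]
          exact Submodule.zero_mem _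
      · show f.coeff i * 0 ∈ _
        rw [mul_zero]; exact Submodule.zero_mem _
      · intro y z _ _ hy hz
        show f.coeff i * (y + z) ∈ _
        rw [mul_add]; exact Submodule.add_mem _ hy hz
      · intro c y _ hy
        show f.coeff i * (c • y) ∈ _
        rw [smul_eq_mul, mul_left_comm]
        exact Ideal.mul_mem_left _ _ hy
    · show (0 : R) * s ∈ _
      rw [zero_mul]; exact Submodule.zero_mem _
    · intro y z _ _ hy hz
      show (y + z) * s ∈ _
      rw [add_mul]; exact Submodule.add_mem _ hy hz
    · intro c y _ hy
      show (c • y) * s ∈ _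
      rw [smul_eq_mul, mul_assoc]
      exact Ideal.mul_mem_left _ _ hy
end

section
/- If f, g are polynomials over a commutative ring R and f has n coefficients, then c(fg)·[c(f)·c(g)]^{n-1} = [c(f)·c(g)]^n; in particular c(fg) is a reduction of c(f)·c(g). -/
open Polynomial hiding contentIdeal coeff_mem_contentIdeal

section aux
variable {R : Type*} [CommRing R]

lemma coeff_mem_contentIdeal (f : R[X]) (i : ℕ) : f.coeff i ∈ contentIdeal f :=
  Ideal.subset_span ⟨i, rfl⟩

lemma contentIdeal_mul_le (f g : R[X]) :
    contentIdeal (f * g) ≤ contentIdeal f * contentIdeal g := by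
  rw [contentIdeal, Ideal.span_le]
  rintro _ ⟨n, rfl⟩
  rw [coeff_mul]
  exact Ideal.sum_mem _ fun p _ =>
    Ideal.mul_mem_mul (coeff_mem_contentIdeal f p.1) (coeff_mem_contentIdeal g p.2)

lemma contentIdeal_sub_le (p q : R[X]) :
    contentIdeal (p - q) ≤ contentIdeal p ⊔ contentIdeal q := by
  rw [contentIdeal, Ideal.span_le]
  rintro _ ⟨n, rfl⟩
  rw [coeff_sub]
  exact sub_mem (Ideal.mem_sup_left (coeff_mem_contentIdeal p n))
    (Ideal.mem_sup_right (coeff_mem_contentIdeal q n))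

lemma contentIdeal_mul_monomial_le (f : R[X]) (k : ℕ) (b : R) :
    contentIdeal (f * monomial k b) ≤ Ideal.span {b} * contentIdeal f := by
  rw [contentIdeal, Ideal.span_le]
  rintro _ ⟨n, rfl⟩
  rcases le_or_gt k n with h | h
  · have hn : (f * monomial k b).coeff n = f.coeff (n - k) * b := by
      conv_lhs => rw [show n = (n - k) + k by omega]
      rw [coeff_mul_monomial]
    rw [hn, mul_comm (f.coeff (n - k)) b]
    exact Ideal.mul_mem_mul (Ideal.mem_span_singleton_self b) (coeff_mem_contentIdeal f _)
  · have hn : (f * monomial k b).coeff n = 0 := by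
      rw [coeff_mul]
      apply Finset.sum_eq_zero
      rintro ⟨u, v⟩ huv
      rw [Finset.HasAntidiagonal.mem_antidiagonal] at huv
      rw [coeff_monomial, if_neg (by omega)]
      ring
    simp [hn]

/-- Dedekind–Mertens: `c(f)^(m+1) c(g) ≤ c(f)^m c(fg)` whenever `natDegree g ≤ m`. -/
lemma dedekind_mertens_le (f : R[X]) :
    ∀ m : ℕ, ∀ g : R[X], g.natDegree ≤ m →
      contentIdeal f ^ (m + 1) * contentIdeal g ≤
        contentIdeal f ^ m * contentIdeal (f * g) := by
  intro m
  induction m with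
  | zero =>
    intro g hg
    obtain ⟨bb, rfl⟩ := natDegree_eq_zero.mp (Nat.le_zero.mp hg)
    rw [pow_one, pow_zero, one_mul]
    have h1 : contentIdeal (C bb) ≤ Ideal.span {bb} := by
      rw [contentIdeal, Ideal.span_le]
      rintro _ ⟨n, rfl⟩
      rw [coeff_C]
      split
      · exact Ideal.mem_span_singleton_self bb
      · exact zero_mem _
    refine le_trans (Ideal.mul_mono_right h1) ?_
    rw [contentIdeal, Ideal.span_mul_span']
    rw [Ideal.span_le]
    rintro _ ⟨x, ⟨i, rfl⟩, y, hy, rfl⟩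
    rw [Set.mem_singleton_iff] at hy
    show f.coeff i * y ∈ contentIdeal (f * C bb)
    rw [hy, ← coeff_mul_C]
    exact coeff_mem_contentIdeal _ i
  | succ m ih =>
    intro g hg
    set I := contentIdeal f with hI
    set k := g.natDegree with hk
    set b := g.coeff k with hb
    set g₁ := g - monomial k b with hg₁
    have hg1coeff : ∀ v, k ≤ v → g₁.coeff v = 0 := by
      intro v hv
      rw [hg₁, coeff_sub, coeff_monomial]
      rcases eq_or_lt_of_le hv with h | h
      · rw [if_pos h, ← h, hb, sub_self]
      · rw [if_neg (by omega), coeff_eq_zero_of_natDegree_lt (by omega), sub_zero]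
    have hg1deg : g₁.natDegree ≤ m := by
      rw [natDegree_le_iff_coeff_eq_zero]
      intro N hN
      rcases le_or_gt k N with h | h
      · exact hg1coeff N h
      · exfalso; omega
    have hfg1 : f * g₁ = f * g - f * monomial k b := by rw [hg₁]; ring
    have hcle : contentIdeal (f * g₁) ≤ contentIdeal (f * g) ⊔ Ideal.span {b} * I := by
      rw [hfg1]
      exact le_trans (contentIdeal_sub_le _ _)
        (sup_le_sup le_rfl (contentIdeal_mul_monomial_le f k b))
    set T := I ^ (m + 1) * contentIdeal (f * g) with hT
    -- the key downward induction
    have key : ∀ d : ℕ, ∀ u : ℕ, f.natDegree < u + d →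
        Ideal.span {f.coeff u} * (Ideal.span {b} * I ^ (m + 1)) ≤ T := by
      intro d
      induction d with
      | zero =>
        intro u hu
        rw [coeff_eq_zero_of_natDegree_lt (by omega)]
        simp [Ideal.span_singleton_eq_bot.mpr rfl]
      | succ d hd =>
        intro i hi
        have core : ∀ x ∈ I ^ (m + 1), b * (f.coeff i * x) ∈ T := by
          intro x hx
          have hcoefid : b * f.coeff i =
              (f * g).coeff (i + k) - (f * g₁).coeff (i + k) := by
            have h2 : (f * g₁).coeff (i + k) =
                (f * g).coeff (i + k) - f.coeff i * b := by
              rw [hfg1, coeff_sub, coeff_mul_monomial]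
            rw [h2]; ring
          have heq : b * (f.coeff i * x) =
              (f * g).coeff (i + k) * x - (f * g₁).coeff (i + k) * x := by
            rw [← sub_mul, ← hcoefid]; ring
          rw [heq]
          refine sub_mem ?_ ?_
          · rw [mul_comm ((f * g).coeff (i + k)) x]
            exact Ideal.mul_mem_mul hx (coeff_mem_contentIdeal _ _)
          · rw [coeff_mul, Finset.sum_mul]
            apply Ideal.sum_mem
            rintro ⟨u, v⟩ huv
            have huv' : u + v = i + k := Finset.HasAntidiagonal.mem_antidiagonal.mp huv
            by_cases hui : u ≤ i
            · rw [hg1coeff v (by omega)]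
              simp
            · push_neg at hui
              have hy : g₁.coeff v * x ∈ I ^ m * contentIdeal (f * g₁) := by
                apply ih g₁ hg1deg
                have h2a := Ideal.mul_mem_mul hx (coeff_mem_contentIdeal g₁ v)
                rwa [mul_comm x (g₁.coeff v)] at h2a
              have hy' : g₁.coeff v * x ∈
                  I ^ m * contentIdeal (f * g) ⊔ I ^ m * (Ideal.span {b} * I) := by
                rw [← Ideal.mul_sup]
                exact Ideal.mul_mono_right hcle hy
              rw [Submodule.mem_sup] at hy'
              obtain ⟨y₁, hy₁, y₂, hy₂, hsum⟩ := hy'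
              have hterm : f.coeff u * g₁.coeff v * x = f.coeff u * y₁ + f.coeff u * y₂ := by
                rw [mul_assoc, ← hsum, mul_add]
              rw [hterm]
              refine add_mem ?_ ?_
              · have h3 := Ideal.mul_mem_mul (coeff_mem_contentIdeal f u) hy₁
                rwa [← mul_assoc, ← pow_succ'] at h3
              · have hy₂' : y₂ ∈ Ideal.span {b} * I ^ (m + 1) := by
                  have : I ^ m * (Ideal.span {b} * I) = Ideal.span {b} * I ^ (m + 1) := by
                    rw [pow_succ]; ring
                  rwa [this] at hy₂
                exact hd u (by omega)
                  (Ideal.mul_mem_mul (Ideal.mem_span_singleton_self _) hy₂')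
        rw [Ideal.mul_le]
        rintro r hr z hz
        obtain ⟨s, rfl⟩ := Ideal.mem_span_singleton'.mp hr
        have hz' : f.coeff i * z ∈ T := by
          refine Submodule.mul_induction_on hz ?_ ?_
          · intro p hp q hq
            obtain ⟨s', rfl⟩ := Ideal.mem_span_singleton'.mp hp
            have := core q hq
            have h4 : f.coeff i * (s' * b * q) = s' * (b * (f.coeff i * q)) := by ring
            rw [h4]
            exact Ideal.mul_mem_left T s' (core q hq)
          · intro x y hx hy
            rw [mul_add]
            exact add_mem hx hy
        have h5 : s * f.coeff i * z = s * (f.coeff i * z) := by ring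
        rw [h5]
        exact Ideal.mul_mem_left T s hz'
    have keyfull : Ideal.span {b} * I ^ (m + 2) ≤ T := by
      have h6 : Ideal.span {b} * I ^ (m + 2) = I * (Ideal.span {b} * I ^ (m + 1)) := by
        rw [pow_succ']; ring
      rw [h6, Ideal.mul_le]
      intro r hr s hs
      rw [hI, contentIdeal] at hr
      refine Submodule.span_induction ?_ ?_ ?_ ?_ hr
      · rintro _ ⟨u, rfl⟩
        exact key (f.natDegree + 1) u (by omega)
          (Ideal.mul_mem_mul (Ideal.mem_span_singleton_self _) hs)
      · simp
      · intro x y _ _ hx hy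
        rw [add_mul]
        exact add_mem hx hy
      · intro c x _ hx
        rw [smul_eq_mul, mul_assoc]
        exact Ideal.mul_mem_left T c hx
    -- assemble
    have hgsup : contentIdeal g ≤ contentIdeal g₁ ⊔ Ideal.span {b} := by
      rw [contentIdeal, Ideal.span_le]
      rintro _ ⟨v, rfl⟩
      have h7 : g.coeff v = g₁.coeff v + (monomial k b).coeff v := by
        rw [hg₁, coeff_sub]; ring
      rw [h7]
      refine add_mem (Ideal.mem_sup_left (coeff_mem_contentIdeal _ _)) ?_
      rw [coeff_monomial]
      split
      · exact Ideal.mem_sup_right (Ideal.mem_span_singleton_self b)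
      · exact zero_mem _
    calc I ^ (m + 1 + 1) * contentIdeal g
        ≤ I ^ (m + 2) * (contentIdeal g₁ ⊔ Ideal.span {b}) := Ideal.mul_mono_right hgsup
      _ = I ^ (m + 2) * contentIdeal g₁ ⊔ Ideal.span {b} * I ^ (m + 2) := by
          rw [Ideal.mul_sup, mul_comm (Ideal.span {b})]
      _ ≤ T := by
          refine sup_le ?_ keyfull
          have h8 : I ^ (m + 2) * contentIdeal g₁ = I * (I ^ (m + 1) * contentIdeal g₁) := by
            rw [pow_succ']; ring
          rw [h8]
          refine le_trans (Ideal.mul_mono_right (ih g₁ hg1deg)) ?_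
          have h9 : I * (I ^ m * contentIdeal (f * g₁)) = I ^ (m + 1) * contentIdeal (f * g₁) := by
            rw [pow_succ']; ring
          rw [h9]
          refine le_trans (Ideal.mul_mono_right hcle) ?_
          rw [Ideal.mul_sup]
          refine sup_le le_rfl ?_
          have h10 : I ^ (m + 1) * (Ideal.span {b} * I) = Ideal.span {b} * I ^ (m + 2) := by
            rw [pow_succ]; ring
          rw [h10]
          exact keyfull

end aux

/-- `J` is a reduction of `I`: `J ⊆ I` and `J·I^r = I^(r+1)` for some `r ≥ 0`. -/
def IsReduction {R : Type*} [CommRing R] (J I : Ideal R) : Prop :=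
  J ≤ I ∧ ∃ r : ℕ, J * I ^ r = I ^ (r + 1)

/-- The 'decayed' Dedekind–Mertens content formula: if `f` has `n` coefficients then
`c(fg)·[c(f)·c(g)]^(n-1) = [c(f)·c(g)]^n`; in particular `c(fg)` is a reduction of
`c(f)·c(g)`. -/
theorem decayed_dedekind_mertens {R : Type*} [CommRing R] (f g : Polynomial R) (n : ℕ)
    (hn : f.natDegree < n) :
    contentIdeal (f * g) * (contentIdeal f * contentIdeal g) ^ (n - 1) =
        (contentIdeal f * contentIdeal g) ^ n ∧
      IsReduction (contentIdeal (f * g)) (contentIdeal f * contentIdeal g) := by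
  obtain ⟨r, rfl⟩ : ∃ r, n = r + 1 := ⟨n - 1, by omega⟩
  simp only [Nat.add_sub_cancel]
  have hdm := dedekind_mertens_le g r f (by omega)
  rw [mul_comm g f] at hdm
  have hmain : contentIdeal (f * g) * (contentIdeal f * contentIdeal g) ^ r =
      (contentIdeal f * contentIdeal g) ^ (r + 1) := by
    apply le_antisymm
    · calc contentIdeal (f * g) * (contentIdeal f * contentIdeal g) ^ r
          ≤ (contentIdeal f * contentIdeal g) * (contentIdeal f * contentIdeal g) ^ r :=
            Ideal.mul_mono_left (contentIdeal_mul_le f g)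
        _ = (contentIdeal f * contentIdeal g) ^ (r + 1) := (pow_succ' _ _).symm
    · calc (contentIdeal f * contentIdeal g) ^ (r + 1)
          = contentIdeal f ^ r * (contentIdeal g ^ (r + 1) * contentIdeal f) := by
            rw [mul_pow]; ring
        _ ≤ contentIdeal f ^ r * (contentIdeal g ^ r * contentIdeal (f * g)) :=
            Ideal.mul_mono_right hdm
        _ = contentIdeal (f * g) * (contentIdeal f * contentIdeal g) ^ r := by
            rw [mul_pow]; ring
  exact ⟨hmain, contentIdeal_mul_le f g, r, hmain⟩
end

section
/- The edge subring of the complete graph K_{n+1} (the K-subalgebra of K[x_1,…,x_{n+1}] generated by all x_i x_j with i < j), standard graded with generators in degree 1, has multiplicity 2^n - (n+1) for n ≥ 2. -/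
open MvPolynomial

/-- The degree-`j` component of the edge subring of the complete graph `K_{n+1}`: the
`K`-span of all products of `j` squarefree quadratic monomials `x_a x_b` (`a ≠ b`). -/
noncomputable def edgeSubringComponent (K : Type*) [Field K] (n j : ℕ) :
    Submodule K (MvPolynomial (Fin (n + 1)) K) :=
  Submodule.span K {f | ∃ g : Fin j → MvPolynomial (Fin (n + 1)) K,
    (∀ t, ∃ a b : Fin (n + 1), a ≠ b ∧ g t = X a * X b) ∧ f = ∏ t, g t}

section Aux
open Finset


lemma card_antidiag (m d : ℕ) :
    (Finset.finsuppAntidiag (Finset.univ : Finset (Fin m)) d).card = (m + d - 1).choose d := by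
  classical
  rw [← Fintype.card_coe]
  rw [Fintype.card_congr
    ((Equiv.subtypeEquivRight (fun a => ?_)).trans (Sym.equivNatSum (Fin m) d).symm)]
  · rw [Sym.card_sym_eq_choose, Fintype.card_fin]
  · rw [Finset.mem_finsuppAntidiag]
    simp [Finsupp.sum_fintype]

lemma prod_monomial_one {σ K ι : Type*} [CommSemiring K] (s : Finset ι) (d : ι → (σ →₀ ℕ)) :
    ∏ t ∈ s, monomial (d t) (1:K) = monomial (∑ t ∈ s, d t) 1 := by
  induction s using Finset.cons_induction with
  | empty => simp
  | cons a s ha ih => rw [Finset.prod_cons, Finset.sum_cons, ih, monomial_mul, one_mul]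

noncomputable def goodFinset (n j : ℕ) : Finset (Fin (n+1) →₀ ℕ) := by
  classical
  exact (Finset.finsuppAntidiag Finset.univ (2*j)).filter (fun a => ∀ i, a i ≤ j)

lemma mem_goodFinset {n j : ℕ} {a : Fin (n+1) →₀ ℕ} :
    a ∈ goodFinset n j ↔ (∑ i, a i) = 2*j ∧ ∀ i, a i ≤ j := by
  classical
  simp [goodFinset, Finset.mem_filter, Finset.mem_finsuppAntidiag]

lemma X_mul_X_eq {K : Type*} [CommSemiring K] {m : ℕ} (a b : Fin m) :
    (X a * X b : MvPolynomial (Fin m) K)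
      = monomial (Finsupp.single a 1 + Finsupp.single b 1) 1 := by
  rw [← pow_one (X a), ← pow_one (X b), X_pow_eq_monomial, X_pow_eq_monomial,
    monomial_mul, one_mul]

lemma decomp_aux (n : ℕ) (hn : 2 ≤ n) : ∀ (j : ℕ) (a : Fin (n+1) →₀ ℕ),
    (∑ i, a i) = 2*j → (∀ i, a i ≤ j) →
    ∃ u v : Fin j → Fin (n+1), (∀ t, u t ≠ v t) ∧
      a = ∑ t, (Finsupp.single (u t) 1 + Finsupp.single (v t) 1) := by
  intro j
  induction j with
  | zero =>
    intro a hsum hle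
    refine ⟨Fin.elim0, Fin.elim0, fun t => t.elim0, ?_⟩
    have : a = 0 := by
      ext i
      exact Nat.le_zero.mp (hle i)
    simp [this]
  | succ j ih =>
    intro a hsum hle
    -- pick u0 maximizing a
    obtain ⟨u0, -, hu0⟩ := Finset.exists_max_image Finset.univ a ⟨0, Finset.mem_univ 0⟩
    have hne : ((Finset.univ : Finset (Fin (n+1))).erase u0).Nonempty := by
      rw [← Finset.card_pos, Finset.card_erase_of_mem (Finset.mem_univ u0)]
      simp [Fintype.card_fin]; omega
    obtain ⟨v0, hv0mem, hv0⟩ := Finset.exists_max_image _ a hne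
    have huv : u0 ≠ v0 := (Finset.ne_of_mem_erase hv0mem).symm
    have hau : 0 < a u0 := by
      by_contra h
      push_neg at h
      have : ∀ i, a i = 0 := fun i => Nat.le_zero.mp ((hu0 i (Finset.mem_univ i)).trans h)
      simp [this] at hsum
    have hav : 0 < a v0 := by
      by_contra h
      push_neg at h
      have hz : ∀ i, i ≠ u0 → a i = 0 := fun i hi =>
        Nat.le_zero.mp ((hv0 i (Finset.mem_erase.mpr ⟨hi, Finset.mem_univ i⟩)).trans h)
      have : ∑ i, a i = a u0 := by
        rw [← Finset.sum_subset (Finset.subset_univ {u0})]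
        · simp
        · intro x _ hx
          exact hz x (by simpa using hx)
      have := hle u0
      omega
    set e : Fin (n+1) →₀ ℕ := Finsupp.single u0 1 + Finsupp.single v0 1 with he
    have hea : e ≤ a := by
      intro i
      rcases eq_or_ne i u0 with rfl | h1
      · simp only [he, Finsupp.add_apply, Finsupp.single_apply]
        have h := hau; split_ifs <;> omega
      · rcases eq_or_ne i v0 with rfl | h2
        · simp only [he, Finsupp.add_apply, Finsupp.single_apply]
          have h := hav; split_ifs <;> omega
        · simp [he, Finsupp.single_apply, Ne.symm h1, Ne.symm h2]
    set b : Fin (n+1) →₀ ℕ := a - e with hb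
    have hbe : b + e = a := by
      ext i
      have := hea i
      simp only [hb, Finsupp.add_apply, Finsupp.tsub_apply]
      omega
    have hesum : ∑ i, e i = 2 := by
      simp [he, Finsupp.add_apply, Finsupp.single_apply, Finset.sum_add_distrib, huv]
    have hbsum : ∑ i, b i = 2*j := by
      have : (∑ i, b i) + (∑ i, e i) = 2*(j+1) := by
        rw [← Finset.sum_add_distrib]
        rw [← hsum]
        exact Finset.sum_congr rfl (fun i _ => by rw [← hbe]; simp)
      omega
    have hble : ∀ i, b i ≤ j := by
      intro i
      rcases eq_or_ne i u0 with rfl | h1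
      · have := hle i; have := hea i
        simp only [hb, Finsupp.tsub_apply]
        have : e i = 1 := by simp [he, Finsupp.single_apply, Ne.symm huv]
        omega
      rcases eq_or_ne i v0 with rfl | h2
      · have := hle i; have := hea i
        have : e i = 1 := by simp [he, Finsupp.single_apply, huv]
        simp only [hb, Finsupp.tsub_apply]
        omega
      -- third coordinate: show a i ≤ j
      have hai : a i ≤ j := by
        by_contra h
        push_neg at h
        have hij : a i = j + 1 := le_antisymm (hle i) h
        have h1' : a u0 = j + 1 := le_antisymm (hle u0) (by
          have := hu0 i (Finset.mem_univ i); omega)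
        have h2' : a v0 = j + 1 := le_antisymm (hle v0) (by
          have := hv0 i (Finset.mem_erase.mpr ⟨h1, Finset.mem_univ i⟩); omega)
        have hsub : ({u0, v0, i} : Finset (Fin (n+1))) ⊆ Finset.univ := Finset.subset_univ _
        have hcard : ∑ x ∈ ({u0, v0, i} : Finset (Fin (n+1))), a x = 3*(j+1) := by
          rw [Finset.sum_insert (by simp [huv, h1.symm]), Finset.sum_insert (by simp [h2.symm]),
            Finset.sum_singleton, h1', h2', hij]
          ring
        have := Finset.sum_le_sum_of_subset hsub (f := a)
        rw [hcard, hsum] at this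
        omega
      have : e i = 0 := by simp [he, Finsupp.single_apply, Ne.symm h1, Ne.symm h2]
      simp only [hb, Finsupp.tsub_apply]
      omega
    obtain ⟨u, v, huvne, hdecomp⟩ := ih b hbsum hble
    refine ⟨Fin.cons u0 u, Fin.cons v0 v, ?_, ?_⟩
    · intro t
      refine Fin.cases ?_ ?_ t
      · simpa using huv
      · intro t'; simpa using huvne t'
    · rw [Fin.sum_univ_succ]
      simp only [Fin.cons_zero, Fin.cons_succ]
      rw [← hdecomp, ← hbe, ← he]
      abel

lemma component_eq (K : Type*) [Field K] (n j : ℕ) (hn : 2 ≤ n) :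
    edgeSubringComponent K n j =
      Submodule.span K ((fun a => (monomial a (1:K))) '' (goodFinset n j : Set _)) := by
  apply le_antisymm
  · rw [edgeSubringComponent, Submodule.span_le]
    rintro f ⟨g, hg, rfl⟩
    choose u v huv hgt using hg
    set d : Fin j → (Fin (n+1) →₀ ℕ) :=
      fun t => Finsupp.single (u t) 1 + Finsupp.single (v t) 1 with hd
    have hprod : ∏ t, g t = monomial (∑ t, d t) (1:K) := by
      rw [← prod_monomial_one]
      refine Finset.prod_congr rfl fun t _ => ?_
      rw [hgt t, hd, X_mul_X_eq]
    rw [hprod]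
    apply Submodule.subset_span
    refine ⟨∑ t, d t, ?_, rfl⟩
    rw [Finset.mem_coe, mem_goodFinset]
    have happ : ∀ i, (∑ t, d t) i = ∑ t, d t i := by
      intro i
      exact Finset.sum_apply' i
    have hdti : ∀ t i, d t i ≤ 1 := by
      intro t i
      have := huv t
      simp only [hd, Finsupp.add_apply, Finsupp.single_apply]
      split_ifs with h1 h2 <;> omega
    constructor
    · simp only [happ]
      rw [Finset.sum_comm]
      have h2 : ∀ t : Fin j, ∑ i, d t i = 2 := by
        intro t
        have := huv t
        simp [hd, Finsupp.add_apply, Finsupp.single_apply, Finset.sum_add_distrib, this]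
      rw [Finset.sum_congr rfl (fun t _ => h2 t)]
      simp [mul_comm]
    · intro i
      rw [happ i]
      calc ∑ t, d t i ≤ ∑ t : Fin j, 1 := Finset.sum_le_sum (fun t _ => hdti t i)
        _ = j := by simp
  · rw [Submodule.span_le]
    rintro f ⟨a, ha, rfl⟩
    rw [Finset.mem_coe, mem_goodFinset] at ha
    obtain ⟨u, v, huv, hdec⟩ := decomp_aux n hn j a ha.1 ha.2
    apply Submodule.subset_span
    refine ⟨fun t => X (u t) * X (v t), fun t => ⟨u t, v t, huv t, rfl⟩, ?_⟩
    rw [hdec]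
    rw [show (∏ t, (X (u t) * X (v t)) : MvPolynomial (Fin (n+1)) K)
        = ∏ t, monomial (Finsupp.single (u t) 1 + Finsupp.single (v t) 1) 1 from
      Finset.prod_congr rfl fun t _ => X_mul_X_eq _ _]
    rw [prod_monomial_one]

lemma finrank_span_image (K : Type*) [Field K] (m : ℕ) (F : Finset (Fin m →₀ ℕ)) :
    Module.finrank K
      (Submodule.span K ((fun a => (monomial a (1:K))) '' (F : Set (Fin m →₀ ℕ)))) = F.card := by
  classical
  have hinj : Function.Injective (fun a : Fin m →₀ ℕ => (monomial a (1:K))) :=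
    monomial_left_injective one_ne_zero
  have himg : (fun a => (monomial a (1:K))) '' (F : Set (Fin m →₀ ℕ))
      = ↑(F.image (fun a => monomial a (1:K))) := by
    rw [Finset.coe_image]
  rw [himg]
  have hr : LinearIndependent K
      ((↑) : Set.range (fun a : Fin m →₀ ℕ => (monomial a (1:K))) → MvPolynomial (Fin m) K) := by
    have := (linearIndepOn_id_range_iff (MvPolynomial.basisMonomials (Fin m) K).injective).mpr
      (MvPolynomial.basisMonomials (Fin m) K).linearIndependent
    rwa [coe_basisMonomials] at this
  have hli : LinearIndependent K
      ((↑) : (↑(F.image (fun a => monomial a (1:K))) : Set (MvPolynomial (Fin m) K)) →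
        MvPolynomial (Fin m) K) :=
    LinearIndepOn.mono (v := id) hr (by rw [Finset.coe_image]; exact Set.image_subset_range _ _)
  rw [finrank_span_set_eq_card hli, Finset.toFinset_coe,
    Finset.card_image_of_injective _ hinj]

lemma sum_single_fin (m : ℕ) (i : Fin m) (c : ℕ) : ∑ x, Finsupp.single i c x = c := by
  simp [Finsupp.single_apply]

lemma sum_coords_antidiag {m d : ℕ} {a : Fin m →₀ ℕ}
    (h : a ∈ Finset.finsuppAntidiag (Finset.univ : Finset (Fin m)) d) : ∑ i, a i = d := by
  rw [Finset.mem_finsuppAntidiag] at h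
  exact h.1

lemma goodFinset_card (n j : ℕ) (hn : 2 ≤ n) :
    (goodFinset n j).card + (n+1) * (j+n-1).choose n = (n+2*j).choose n := by
  classical
  set T := Finset.finsuppAntidiag (Finset.univ : Finset (Fin (n+1))) (2*j) with hT
  have hTcard : T.card = (n+2*j).choose n := by
    rw [hT, card_antidiag]
    have h1 : n + 1 + 2*j - 1 = n + 2*j := by omega
    rw [h1, ← Nat.choose_symm (by omega : n ≤ n + 2*j)]
    congr 1
    omega
  have hsplit : (goodFinset n j).card
      + (T.filter (fun a => ¬ ∀ i, a i ≤ j)).card = T.card := by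
    rw [goodFinset]
    exact Finset.card_filter_add_card_filter_not _
  have hbad : (T.filter (fun a => ¬ ∀ i, a i ≤ j)).card = (n+1) * (j+n-1).choose n := by
    rcases Nat.eq_zero_or_pos j with rfl | hj
    · have : (T.filter (fun a => ¬ ∀ i, a i ≤ 0)) = ∅ := by
        rw [Finset.filter_eq_empty_iff]
        intro a ha
        push_neg
        intro i
        have hs := sum_coords_antidiag ha
        have : a i ≤ ∑ i', a i' := Finset.single_le_sum (fun i' _ => Nat.zero_le _) (mem_univ i)
        omega
      rw [this]
      simp [Nat.choose_eq_zero_of_lt (by omega : n - 1 < n)]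
    · obtain ⟨s, rfl⟩ : ∃ s, j = s + 1 := ⟨j - 1, by omega⟩
      have key : ((Finset.univ : Finset (Fin (n+1)))
          ×ˢ Finset.finsuppAntidiag (Finset.univ : Finset (Fin (n+1))) s).card
          = (T.filter (fun a => ¬ ∀ i, a i ≤ s+1)).card := by
        apply Finset.card_bij (fun p _ => p.2 + Finsupp.single p.1 (s+2))
        · rintro ⟨i, b⟩ hib
          rw [Finset.mem_product] at hib
          have hbs := sum_coords_antidiag hib.2
          rw [Finset.mem_filter]
          constructor
          · rw [hT, Finset.mem_finsuppAntidiag]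
            refine ⟨?_, Finset.subset_univ _⟩
            have : ∑ x, (b + Finsupp.single i (s+2)) x
                = (∑ x, b x) + ∑ x, Finsupp.single i (s+2) x := by
              simp [Finsupp.add_apply, Finset.sum_add_distrib]
            rw [show (Finset.univ.sum ⇑(b + Finsupp.single i (s+2)) : ℕ)
              = ∑ x, (b + Finsupp.single i (s+2)) x from rfl, this, hbs,
              sum_single_fin]
            omega
          · push_neg
            refine ⟨i, ?_⟩
            have h1 : (b + Finsupp.single i (s+2)) i = b i + (s+2) := by
              simp [Finsupp.add_apply, Finsupp.single_apply]
            rw [h1]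
            omega
        · rintro ⟨i, b⟩ hib ⟨i', b'⟩ hib' heq
          rw [Finset.mem_product] at hib hib'
          have hbs := sum_coords_antidiag hib.2
          have hbs' := sum_coords_antidiag hib'.2
          have hii : i = i' := by
            by_contra hne
            have h2 := DFunLike.congr_fun heq i'
            have e1 : Finsupp.single i (s+2) i' = 0 := by
              simp [Finsupp.single_apply, hne]
            have e2 : Finsupp.single i' (s+2) i' = s+2 := by
              simp [Finsupp.single_apply]
            simp only [Finsupp.add_apply, e1, e2] at h2
            have hle : b i' ≤ ∑ x, b x :=
              Finset.single_le_sum (fun _ _ => Nat.zero_le _) (mem_univ i')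
            have hbs2 : ∑ x, b x = s := hbs
            omega
          subst hii
          have : b = b' := by
            ext x
            have := DFunLike.congr_fun heq x
            simp only [Finsupp.add_apply] at this
            omega
          rw [this]
        · intro a ha
          rw [Finset.mem_filter] at ha
          push_neg at ha
          obtain ⟨haT, i, hi⟩ := ha
          have has := sum_coords_antidiag haT
          have hile : ∀ x, Finsupp.single i (s+2) x ≤ a x := by
            intro x
            rcases eq_or_ne i x with rfl | hx
            · rw [show Finsupp.single i (s+2) i = s+2 by simp]
              omega
            · simp [Finsupp.single_apply, hx]
          refine ⟨⟨i, a - Finsupp.single i (s+2)⟩, ?_, ?_⟩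
          · rw [Finset.mem_product]
            refine ⟨mem_univ _, ?_⟩
            rw [Finset.mem_finsuppAntidiag]
            refine ⟨?_, Finset.subset_univ _⟩
            have hadd : (∑ x, (a - Finsupp.single i (s+2)) x)
                + ∑ x, Finsupp.single i (s+2) x = ∑ x, a x := by
              rw [← Finset.sum_add_distrib]
              refine Finset.sum_congr rfl fun x _ => ?_
              rw [Finsupp.tsub_apply]
              have := hile x
              omega
            rw [sum_single_fin] at hadd
            rw [show (Finset.univ.sum ⇑(a - Finsupp.single i (s+2)) : ℕ)
              = ∑ x, (a - Finsupp.single i (s+2)) x from rfl]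
            omega
          · ext x
            simp only [Finsupp.add_apply, Finsupp.tsub_apply]
            have := hile x
            omega
      rw [← key, Finset.card_product, Finset.card_univ, Fintype.card_fin, card_antidiag]
      congr 1
      have e1 : n + 1 + s - 1 = n + s := by omega
      have e2 : s + 1 + n - 1 = n + s := by omega
      rw [e1, e2, ← Nat.choose_symm (Nat.le_add_right n s)]
      congr 1
      omega
  omega

lemma prod_asc (k x : ℕ) :
    ∏ i ∈ Finset.range k, ((x:ℚ) + i + 1) = k.factorial * (x + k).choose k := by
  induction k with
  | zero => simp
  | succ k ih =>
    rw [Finset.prod_range_succ, ih]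
    have h := Nat.add_one_mul_choose_eq (x + k) k
    have hq : ((x + k + 1 : ℕ) : ℚ) * ((x+k).choose k : ℚ)
        = ((x+k+1).choose (k+1) : ℚ) * ((k:ℚ)+1) := by exact_mod_cast h
    push_cast at hq ⊢
    rw [Nat.factorial_succ]
    push_cast
    ring_nf
    ring_nf at hq
    nlinarith [hq]

noncomputable def hilbP (n : ℕ) : Polynomial ℚ :=
  Polynomial.C ((n.factorial : ℚ)⁻¹) *
    ((∏ i ∈ Finset.range n, (Polynomial.C 2 * Polynomial.X + Polynomial.C ((i:ℚ)+1)))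
      - Polynomial.C ((n:ℚ)+1) * ∏ i ∈ Finset.range n, (Polynomial.X + Polynomial.C (i:ℚ)))

lemma hilbP_eval (n : ℕ) (hn : 1 ≤ n) (m : ℕ) :
    (hilbP n).eval (m:ℚ)
      = (((n + 2*m).choose n : ℚ) - ((n:ℚ)+1) * ((m+n-1).choose n : ℚ)) := by
  have h1 : Polynomial.eval (m:ℚ) (∏ i ∈ Finset.range n,
      (Polynomial.C 2 * Polynomial.X + Polynomial.C ((i:ℚ)+1)))
      = n.factorial * ((n + 2*m).choose n : ℚ) := by
    rw [Polynomial.eval_prod]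
    have : ∀ i ∈ Finset.range n, Polynomial.eval (m:ℚ)
        (Polynomial.C 2 * Polynomial.X + Polynomial.C ((i:ℚ)+1)) = ((2*m : ℕ):ℚ) + i + 1 := by
      intro i _
      simp
      push_cast
      ring
    rw [Finset.prod_congr rfl this, prod_asc, Nat.add_comm (2*m) n]
  have h2 : Polynomial.eval (m:ℚ) (∏ i ∈ Finset.range n, (Polynomial.X + Polynomial.C (i:ℚ)))
      = n.factorial * ((m+n-1).choose n : ℚ) := by
    rw [Polynomial.eval_prod]
    rcases Nat.eq_zero_or_pos m with rfl | hm
    · rw [Finset.prod_eq_zero (Finset.mem_range.mpr hn)]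
      · rw [Nat.choose_eq_zero_of_lt (by omega)]
        simp
      · simp
    · obtain ⟨s, rfl⟩ : ∃ s, m = s + 1 := ⟨m - 1, by omega⟩
      have : ∀ i ∈ Finset.range n, Polynomial.eval ((s+1 : ℕ):ℚ)
          (Polynomial.X + Polynomial.C (i:ℚ)) = ((s:ℕ):ℚ) + i + 1 := by
        intro i _
        simp
        push_cast
        ring
      rw [Finset.prod_congr rfl this, prod_asc,
        show s + n = s + 1 + n - 1 by omega]
  rw [hilbP]
  simp only [Polynomial.eval_mul, Polynomial.eval_C, Polynomial.eval_sub, h1, h2]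
  have hf : (n.factorial : ℚ) ≠ 0 := by exact_mod_cast Nat.factorial_ne_zero n
  field_simp

lemma two_pow_gt (n : ℕ) (hn : 2 ≤ n) : n + 1 < 2^n := by
  induction n, hn using Nat.le_induction with
  | base => norm_num
  | succ k hk ih => rw [pow_succ]; omega

lemma hilbP_deg (n : ℕ) (hn : 2 ≤ n) :
    (hilbP n).natDegree = n ∧
      (hilbP n).leadingCoeff = ((2:ℚ)^n - ((n:ℚ)+1)) / n.factorial := by
  set q : Polynomial ℚ :=
    ∏ i ∈ Finset.range n, (Polynomial.C 2 * Polynomial.X + Polynomial.C ((i:ℚ)+1)) with hq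
  set r : Polynomial ℚ := ∏ i ∈ Finset.range n, (Polynomial.X + Polynomial.C (i:ℚ)) with hr
  have hfac : ∀ i : ℕ, (Polynomial.C 2 * Polynomial.X + Polynomial.C ((i:ℚ)+1)).natDegree = 1 :=
    fun i => Polynomial.natDegree_linear two_ne_zero
  have hqdeg : q.natDegree = n := by
    rw [hq, Polynomial.natDegree_prod]
    · rw [Finset.sum_congr rfl fun i _ => hfac i]
      simp
    · intro i _ h
      have := hfac i
      rw [h] at this
      simp at this
  have hqlc : q.leadingCoeff = 2^n := by
    rw [hq, Polynomial.leadingCoeff_prod]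
    rw [Finset.prod_congr rfl (fun i _ => Polynomial.leadingCoeff_linear two_ne_zero)]
    simp
  have hrmonic : r.Monic :=
    Polynomial.monic_prod_of_monic _ _ (fun i _ => Polynomial.monic_X_add_C _)
  have hrdeg : r.natDegree = n := by
    rw [hr, Polynomial.natDegree_prod]
    · rw [Finset.sum_congr rfl fun i _ => Polynomial.natDegree_X_add_C _]
      simp
    · intro i _ h
      have := Polynomial.natDegree_X_add_C (i:ℚ)
      rw [h] at this
      simp at this
  set w : Polynomial ℚ := q - Polynomial.C ((n:ℚ)+1) * r with hw
  have hqc : q.coeff n = 2^n := by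
    conv_lhs => rw [← hqdeg]
    rw [Polynomial.coeff_natDegree, hqlc]
  have hrc : r.coeff n = 1 := by
    conv_lhs => rw [← hrdeg]
    rw [Polynomial.coeff_natDegree, hrmonic.leadingCoeff]
  have hcoeff : w.coeff n = 2^n - ((n:ℚ)+1) := by
    rw [hw, Polynomial.coeff_sub, Polynomial.coeff_C_mul, hqc, hrc, mul_one]
  have hne : (2:ℚ)^n - ((n:ℚ)+1) ≠ 0 := by
    have := two_pow_gt n hn
    have h2 : ((n:ℚ)+1) < 2^n := by exact_mod_cast this
    intro h
    nlinarith
  have hwdeg : w.natDegree = n := by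
    apply Polynomial.natDegree_eq_of_le_of_coeff_ne_zero
    · refine le_trans (Polynomial.natDegree_sub_le _ _) ?_
      rw [hqdeg]
      exact max_le le_rfl (le_trans (Polynomial.natDegree_C_mul_le _ _) hrdeg.le)
    · rw [hcoeff]; exact hne
  have hwlc : w.leadingCoeff = 2^n - ((n:ℚ)+1) := by
    rw [Polynomial.leadingCoeff, hwdeg, hcoeff]
  have hfne : (n.factorial : ℚ) ≠ 0 := by exact_mod_cast Nat.factorial_ne_zero n
  constructor
  · rw [hilbP, ← hq, ← hr, ← hw, Polynomial.natDegree_C_mul (inv_ne_zero hfne), hwdeg]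
  · rw [hilbP, ← hq, ← hr, ← hw, Polynomial.leadingCoeff_mul, Polynomial.leadingCoeff_C, hwlc]
    field_simp

end Aux

/-- (Example `ex:hypersimplex`, case `m = n+1`.)  For `n ≥ 2`, the edge subring of the
complete graph `K_{n+1}` has multiplicity `2^n - (n+1)`: its Hilbert function agrees with a
polynomial of degree `n` in `j` with leading coefficient `(2^n - (n+1))/n!`. -/
theorem complete_graph_edge_subring_multiplicity {K : Type*} [Field K] (n : ℕ) (hn : 2 ≤ n) :
    ∃ p : Polynomial ℚ,
      (∀ j : ℕ, p.eval (j : ℚ) = Module.finrank K (edgeSubringComponent K n j)) ∧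
      p.natDegree = n ∧
      p.leadingCoeff = ((2 : ℚ) ^ n - (n + 1)) / (Nat.factorial n) := by
  refine ⟨hilbP n, ?_, (hilbP_deg n hn).1, ?_⟩
  · intro j
    rw [component_eq K n j hn, finrank_span_image, hilbP_eval n (by omega) j]
    have hc := goodFinset_card n j hn
    have hq : ((goodFinset n j).card : ℚ) + ((n:ℚ)+1) * (((j+n-1).choose n : ℕ) : ℚ)
        = (((n+2*j).choose n : ℕ) : ℚ) := by exact_mod_cast hc
    linarith
  · rw [(hilbP_deg n hn).2]
end
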